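/- (PBDW a priori mean-squared error estimate for imperfect measurements, second estimate of Theorem 2, matrix form.) Let ξ ≥ 0 and assume P(ξ) and P(0) are invertible. Let ε = (ε_1, …, ε_M) be a random vector whose components are independent, each distributed as a Gaussian N(0, σ²). Then, for any s > 0 such that s‖x‖₂ ≤ ‖P(ξ)x‖₂ for all x ∈ ℝ^{M+N} (in particular for s = s_min(P(ξ))), one has 𝔼[‖u*_ξ(ε) − u^opt_{ξ=0}‖₂²] ≤ (ξ·M·‖θ^opt‖₂ / s)² + σ² · Tr(P(ξ)⁻¹ Ĩ P(ξ)⁻ᵀ), where Tr denotes the trace and P⁻ᵀ the transpose of the inverse. -/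

import Mathlib

open Matrix MeasureTheory ProbabilityTheory

/-- Euclidean norm `‖x‖₂` of a real vector. -/
noncomputable def euclNorm {ι : Type*} [Fintype ι] (x : ι → ℝ) : ℝ :=
  ‖(EuclideanSpace.equiv ι ℝ).symm x‖

/-- The regularised PBDW saddle-point matrix `P(ξ) = [[A + ξM·I, K], [Kᵀ, 0]]`. -/
noncomputable def pbdwMat {M N : ℕ} (A : Matrix (Fin M) (Fin M) ℝ)
    (K : Matrix (Fin M) (Fin N) ℝ) (ξ : ℝ) :
    Matrix (Fin M ⊕ Fin N) (Fin M ⊕ Fin N) ℝ :=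
  Matrix.fromBlocks (A + (ξ * (M : ℝ)) • (1 : Matrix (Fin M) (Fin M) ℝ)) K Kᵀ 0

/-- The block matrix `Ĩ = [[I, 0], [0, 0]]`. -/
def iTilde (M N : ℕ) : Matrix (Fin M ⊕ Fin N) (Fin M ⊕ Fin N) ℝ :=
  Matrix.fromBlocks 1 0 0 0

open scoped NNReal ENNReal
open Real Filter Set

set_option linter.unusedSectionVars false

lemma tendsto_mul_exp_neg_mul_sq_cocompact {b : ℝ} (hb : 0 < b) :
    Filter.Tendsto (fun x : ℝ => x * Real.exp (-b * x ^ 2)) (Filter.cocompact ℝ) (nhds 0) := by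
  rw [tendsto_zero_iff_norm_tendsto_zero]
  have h := tendsto_rpow_abs_mul_exp_neg_mul_sq_cocompact hb 1
  refine h.congr fun x => ?_
  rw [Real.rpow_one, Real.norm_eq_abs, abs_mul, abs_of_nonneg (Real.exp_pos _).le]

lemma integrable_sq_mul_exp_neg_mul_sq {b : ℝ} (hb : 0 < b) :
    Integrable fun x : ℝ => x ^ 2 * Real.exp (-b * x ^ 2) := by
  have := integrable_rpow_mul_exp_neg_mul_sq hb (by norm_num : (-1 : ℝ) < 2)
  refine this.congr (Filter.Eventually.of_forall fun x => ?_)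
  simp only []
  rw [show ((2 : ℝ)) = ((2 : ℕ) : ℝ) by norm_num, Real.rpow_natCast]

lemma integral_sq_mul_exp_neg_mul_sq {b : ℝ} (hb : 0 < b) :
    ∫ x : ℝ, x ^ 2 * Real.exp (-b * x ^ 2) = Real.sqrt (π / b) / (2 * b) := by
  set g : ℝ → ℝ := fun x => x * Real.exp (-b * x ^ 2) with hg
  set f' : ℝ → ℝ := fun x => Real.exp (-b * x ^ 2) - (2 * b) * (x ^ 2 * Real.exp (-b * x ^ 2))
    with hf'
  have hderiv : ∀ x : ℝ, HasDerivAt g (f' x) x := by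
    intro x
    have h1 : HasDerivAt (fun x : ℝ => -b * x ^ 2) (-b * (2 * x)) x := by
      simpa using ((hasDerivAt_pow 2 x).const_mul (-b))
    have h2 : HasDerivAt (fun x : ℝ => Real.exp (-b * x ^ 2))
        (Real.exp (-b * x ^ 2) * (-b * (2 * x))) x := h1.exp
    have h3 := (hasDerivAt_id x).fun_mul h2
    refine h3.congr_deriv ?_
    simp [f']
    ring
  have hint : Integrable f' := by
    exact (integrable_exp_neg_mul_sq hb).sub ((integrable_sq_mul_exp_neg_mul_sq hb).const_mul _)
  have htop : Filter.Tendsto g atTop (nhds 0) :=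
    (tendsto_mul_exp_neg_mul_sq_cocompact hb).mono_left
      _root_.atTop_le_cocompact
  have hbot : Filter.Tendsto g atBot (nhds 0) :=
    (tendsto_mul_exp_neg_mul_sq_cocompact hb).mono_left
      _root_.atBot_le_cocompact
  have hIoi : ∫ x in Set.Ioi (0:ℝ), f' x = 0 - g 0 :=
    integral_Ioi_of_hasDerivAt_of_tendsto' (fun x _ => hderiv x) hint.integrableOn htop
  have hIic : ∫ x in Set.Iic (0:ℝ), f' x = g 0 - 0 :=
    integral_Iic_of_hasDerivAt_of_tendsto' (fun x _ => hderiv x) hint.integrableOn hbot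
  have htot : ∫ x : ℝ, f' x = 0 := by
    rw [← intervalIntegral.integral_Iic_add_Ioi hint.integrableOn hint.integrableOn, hIoi, hIic]
    simp [g]
  rw [hf'] at htot
  rw [integral_sub (integrable_exp_neg_mul_sq hb)
    ((integrable_sq_mul_exp_neg_mul_sq hb).const_mul _), integral_const_mul,
    integral_gaussian, sub_eq_zero] at htot
  field_simp at htot ⊢
  linarith

lemma integral_odd_zero (f : ℝ → ℝ) (hodd : ∀ x, f (-x) = - f x) : ∫ x : ℝ, f x = 0 := by
  have h : ∫ x : ℝ, f x = ∫ x : ℝ, f (-x) := (MeasureTheory.integral_neg_eq_self f volume).symm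
  have h2 : ∫ x : ℝ, f (-x) = - ∫ x : ℝ, f x := by
    simp_rw [hodd]; exact integral_neg f
  linarith [h, h2]

lemma gaussianReal_integral_eq {v : ℝ≥0} (hv : v ≠ 0) (g : ℝ → ℝ) :
    ∫ x, g x ∂(gaussianReal 0 v) = ∫ x, gaussianPDFReal 0 v x * g x := by
  rw [gaussianReal_of_var_ne_zero 0 hv]
  have hpdf : gaussianPDF 0 v = fun x => ((gaussianPDFReal 0 v x).toNNReal : ℝ≥0∞) := rfl
  rw [hpdf, integral_withDensity_eq_integral_smul
    ((measurable_gaussianPDFReal 0 v).real_toNNReal) g]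
  refine integral_congr_ae (Filter.Eventually.of_forall fun x => ?_)
  simp [NNReal.smul_def, Real.coe_toNNReal _ (gaussianPDFReal_nonneg 0 v x)]

lemma gaussianPDFReal_eq (v : ℝ≥0) (x : ℝ) :
    gaussianPDFReal 0 v x = (Real.sqrt (2 * π * v))⁻¹ * Real.exp (-(2 * v : ℝ)⁻¹ * x ^ 2) := by
  rw [gaussianPDFReal]
  congr 1
  rw [sub_zero]
  congr 1
  rw [neg_div, neg_mul]
  congr 1
  rw [div_eq_inv_mul]

lemma integrable_id_gaussianReal (v : ℝ≥0) :
    Integrable (fun x : ℝ => x) (gaussianReal 0 v) := by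
  by_cases hv : v = 0
  · subst hv; simp only [gaussianReal_zero_var]
    refine (integrable_const (0:ℝ)).congr ?_
    rw [MeasureTheory.ae_dirac_eq]
    exact Filter.eventually_pure.mpr rfl
  · have hb : (0:ℝ) < (2 * v : ℝ)⁻¹ := by
      have : (0:ℝ) < v := by positivity
      positivity
    rw [gaussianReal_of_var_ne_zero 0 hv]
    rw [integrable_withDensity_iff (measurable_gaussianPDF 0 v)
      (Filter.Eventually.of_forall fun x => ENNReal.ofReal_lt_top)]
    refine ((integrable_mul_exp_neg_mul_sq hb).const_mul
      ((Real.sqrt (2 * π * v))⁻¹)).congr (Filter.Eventually.of_forall fun x => ?_)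
    have hx : (gaussianPDF 0 v x).toReal = gaussianPDFReal 0 v x :=
      ENNReal.toReal_ofReal (gaussianPDFReal_nonneg 0 v x)
    show _ = x * (gaussianPDF 0 v x).toReal
    rw [hx, gaussianPDFReal_eq]
    ring

lemma integrable_sq_gaussianReal (v : ℝ≥0) :
    Integrable (fun x : ℝ => x ^ 2) (gaussianReal 0 v) := by
  by_cases hv : v = 0
  · subst hv; simp only [gaussianReal_zero_var]
    refine (integrable_const (0:ℝ)).congr ?_
    rw [MeasureTheory.ae_dirac_eq]
    exact Filter.eventually_pure.mpr (by norm_num)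
  · have hb : (0:ℝ) < (2 * v : ℝ)⁻¹ := by
      have : (0:ℝ) < v := by positivity
      positivity
    rw [gaussianReal_of_var_ne_zero 0 hv]
    rw [integrable_withDensity_iff (measurable_gaussianPDF 0 v)
      (Filter.Eventually.of_forall fun x => ENNReal.ofReal_lt_top)]
    refine ((integrable_sq_mul_exp_neg_mul_sq hb).const_mul
      ((Real.sqrt (2 * π * v))⁻¹)).congr (Filter.Eventually.of_forall fun x => ?_)
    have hx : (gaussianPDF 0 v x).toReal = gaussianPDFReal 0 v x :=
      ENNReal.toReal_ofReal (gaussianPDFReal_nonneg 0 v x)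
    show _ = x ^ 2 * (gaussianPDF 0 v x).toReal
    rw [hx, gaussianPDFReal_eq]
    ring

lemma integral_id_gaussianReal' (v : ℝ≥0) : ∫ x, x ∂(gaussianReal 0 v) = 0 := by
  by_cases hv : v = 0
  · subst hv; simp
  · rw [gaussianReal_integral_eq hv]
    refine integral_odd_zero _ fun x => ?_
    simp only [gaussianPDFReal_eq, neg_sq]
    ring

lemma integral_sq_gaussianReal (v : ℝ≥0) : ∫ x, x ^ 2 ∂(gaussianReal 0 v) = v := by
  by_cases hv : v = 0
  · subst hv; simp
  · have hvpos : (0:ℝ) < v := by positivity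
    have hb : (0:ℝ) < (2 * v : ℝ)⁻¹ := by positivity
    rw [gaussianReal_integral_eq hv]
    have : ∀ x : ℝ, gaussianPDFReal 0 v x * x ^ 2
        = (Real.sqrt (2 * π * v))⁻¹ * (x ^ 2 * Real.exp (-(2 * v : ℝ)⁻¹ * x ^ 2)) := by
      intro x; rw [gaussianPDFReal_eq]; ring
    simp_rw [this]
    rw [integral_const_mul, integral_sq_mul_exp_neg_mul_sq hb]
    have h1 : π / (2 * v : ℝ)⁻¹ = 2 * π * v := by field_simp
    have h2 : 2 * (2 * v : ℝ)⁻¹ = (v : ℝ)⁻¹ := by field_simp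
    rw [h1, h2]
    have h3 : Real.sqrt (2 * π * v) ≠ 0 := by positivity
    field_simp

section Prob
variable {Ω : Type*} [MeasurableSpace Ω] (μ : Measure Ω) [IsProbabilityMeasure μ]
  {M : ℕ} (ε : Ω → Fin M → ℝ) (σ : NNReal)

lemma eps_memL2 (hmeas : ∀ i, Measurable fun ω => ε ω i)
    (hgauss : ∀ i, Measure.map (fun ω => ε ω i) μ = gaussianReal 0 (σ ^ 2)) (i : Fin M) :
    MemLp (fun ω => ε ω i) 2 μ := by
  rw [memLp_two_iff_integrable_sq (hmeas i).aestronglyMeasurable]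
  have : Integrable (fun x : ℝ => x ^ 2) (Measure.map (fun ω => ε ω i) μ) := by
    rw [hgauss i]; exact integrable_sq_gaussianReal _
  exact (integrable_map_measure (g := fun x : ℝ => x ^ 2)
    ((measurable_id.pow_const 2).aestronglyMeasurable) (hmeas i).aemeasurable).mp this

lemma eps_integral_zero (hmeas : ∀ i, Measurable fun ω => ε ω i)
    (hgauss : ∀ i, Measure.map (fun ω => ε ω i) μ = gaussianReal 0 (σ ^ 2)) (i : Fin M) :
    ∫ ω, ε ω i ∂μ = 0 := by
  have := integral_map (μ := μ) (f := fun x : ℝ => x) (hmeas i).aemeasurable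
    aestronglyMeasurable_id
  rw [hgauss i, integral_id_gaussianReal' _] at this
  exact this.symm

lemma eps_integral_sq (hmeas : ∀ i, Measurable fun ω => ε ω i)
    (hgauss : ∀ i, Measure.map (fun ω => ε ω i) μ = gaussianReal 0 (σ ^ 2)) (i : Fin M) :
    ∫ ω, ε ω i ^ 2 ∂μ = (σ : ℝ) ^ 2 := by
  have := integral_map (μ := μ) (f := fun x : ℝ => x ^ 2) (hmeas i).aemeasurable
    (measurable_id.pow_const 2).aestronglyMeasurable
  rw [hgauss i, integral_sq_gaussianReal _] at this
  rw [← this]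
  push_cast
  ring

lemma eps_integral_mul (hmeas : ∀ i, Measurable fun ω => ε ω i)
    (hindep : iIndepFun (fun i ω => ε ω i) μ)
    (hgauss : ∀ i, Measure.map (fun ω => ε ω i) μ = gaussianReal 0 (σ ^ 2))
    {i j : Fin M} (hij : i ≠ j) :
    ∫ ω, ε ω i * ε ω j ∂μ = 0 := by
  have h := (hindep.indepFun hij).integral_mul_eq_mul_integral
    (hmeas i).aestronglyMeasurable (hmeas j).aestronglyMeasurable
  have h2 : ∫ ω, ε ω i * ε ω j ∂μ = (∫ ω, ε ω i ∂μ) * ∫ ω, ε ω j ∂μ := h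
  rw [h2, eps_integral_zero μ ε σ hmeas hgauss i, zero_mul]

lemma eps_integrable_mul (hmeas : ∀ i, Measurable fun ω => ε ω i)
    (hindep : iIndepFun (fun i ω => ε ω i) μ)
    (hgauss : ∀ i, Measure.map (fun ω => ε ω i) μ = gaussianReal 0 (σ ^ 2))
    (i j : Fin M) :
    Integrable (fun ω => ε ω i * ε ω j) μ := by
  rcases eq_or_ne i j with rfl | hij
  · have := (eps_memL2 μ ε σ hmeas hgauss i).integrable_sq
    refine this.congr (Filter.Eventually.of_forall fun ω => by ring)
  · exact (hindep.indepFun hij).integrable_mul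
      ((eps_memL2 μ ε σ hmeas hgauss i).integrable one_le_two)
      ((eps_memL2 μ ε σ hmeas hgauss j).integrable one_le_two)

lemma key_expectation (hmeas : ∀ i, Measurable fun ω => ε ω i)
    (hindep : iIndepFun (fun i ω => ε ω i) μ)
    (hgauss : ∀ i, Measure.map (fun ω => ε ω i) μ = gaussianReal 0 (σ ^ 2))
    (c : ℝ) (a : Fin M → ℝ) :
    ∫ ω, (c + ∑ j, a j * ε ω j) ^ 2 ∂μ
      = c ^ 2 + (σ : ℝ) ^ 2 * ∑ j, a j ^ 2 := by
  have hintL : ∀ j, Integrable (fun ω => a j * ε ω j) μ := fun j =>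
    ((eps_memL2 μ ε σ hmeas hgauss j).integrable one_le_two).const_mul _
  have hintLL : ∀ j k, Integrable (fun ω => a j * ε ω j * (a k * ε ω k)) μ := by
    intro j k
    have := (eps_integrable_mul μ ε σ hmeas hindep hgauss j k).const_mul (a j * a k)
    refine this.congr (Filter.Eventually.of_forall fun ω => by ring)
  have expand : ∀ ω, (c + ∑ j, a j * ε ω j) ^ 2
      = c ^ 2 + (2 * c) * (∑ j, a j * ε ω j)
        + ∑ j, ∑ k, a j * ε ω j * (a k * ε ω k) := by
    intro ω
    rw [← Finset.sum_mul_sum]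
    ring
  simp_rw [expand]
  have hI1 : Integrable (fun ω => (2 * c) * (∑ j, a j * ε ω j)) μ :=
    (integrable_finset_sum _ fun j _ => hintL j).const_mul _
  have hI2 : Integrable (fun ω => ∑ j, ∑ k, a j * ε ω j * (a k * ε ω k)) μ :=
    integrable_finset_sum _ fun j _ => integrable_finset_sum _ fun k _ => hintLL j k
  rw [integral_add (f := fun ω => c ^ 2 + (2 * c) * (∑ j, a j * ε ω j))
      (g := fun ω => ∑ j, ∑ k, a j * ε ω j * (a k * ε ω k))
      (((integrable_const _).add hI1)) hI2,
    integral_add (f := fun _ => c ^ 2) (integrable_const _) hI1, integral_const]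
  simp only [measure_univ, ENNReal.toReal_one, smul_eq_mul, one_mul, probReal_univ]
  have e1 : ∫ ω, (2 * c) * (∑ j, a j * ε ω j) ∂μ = 0 := by
    rw [integral_const_mul, integral_finset_sum _ fun j _ => hintL j]
    simp_rw [integral_const_mul]
    simp [eps_integral_zero μ ε σ hmeas hgauss]
  have e2 : ∫ ω, ∑ j, ∑ k, a j * ε ω j * (a k * ε ω k) ∂μ
      = (σ : ℝ) ^ 2 * ∑ j, a j ^ 2 := by
    rw [integral_finset_sum _ fun j _ => integrable_finset_sum _ fun k _ => hintLL j k]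
    have : ∀ j, ∫ ω, ∑ k, a j * ε ω j * (a k * ε ω k) ∂μ = (σ : ℝ) ^ 2 * a j ^ 2 := by
      intro j
      rw [integral_finset_sum _ fun k _ => hintLL j k]
      have term : ∀ k, ∫ ω, a j * ε ω j * (a k * ε ω k) ∂μ
          = (a j * a k) * ∫ ω, ε ω j * ε ω k ∂μ := by
        intro k
        rw [← integral_const_mul]
        congr 1; funext ω; ring
      simp_rw [term]
      rw [Finset.sum_eq_single j]
      · have hjj : ∫ ω, ε ω j * ε ω j ∂μ = (σ:ℝ)^2 := by
          rw [← eps_integral_sq μ ε σ hmeas hgauss j]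
          congr 1; funext ω; ring
        rw [hjj]; ring
      · intro k _ hkj
        rw [eps_integral_mul μ ε σ hmeas hindep hgauss (Ne.symm hkj), mul_zero]
      · intro h; exact absurd (Finset.mem_univ j) h
    simp_rw [this]
    rw [← Finset.mul_sum]
  rw [e1, e2, add_zero]

lemma key_integrable (hmeas : ∀ i, Measurable fun ω => ε ω i)
    (hindep : iIndepFun (fun i ω => ε ω i) μ)
    (hgauss : ∀ i, Measure.map (fun ω => ε ω i) μ = gaussianReal 0 (σ ^ 2))
    (c : ℝ) (a : Fin M → ℝ) :
    Integrable (fun ω => (c + ∑ j, a j * ε ω j) ^ 2) μ := by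
  have hintL : ∀ j, Integrable (fun ω => a j * ε ω j) μ := fun j =>
    ((eps_memL2 μ ε σ hmeas hgauss j).integrable one_le_two).const_mul _
  have hintLL : ∀ j k, Integrable (fun ω => a j * ε ω j * (a k * ε ω k)) μ := by
    intro j k
    have := (eps_integrable_mul μ ε σ hmeas hindep hgauss j k).const_mul (a j * a k)
    refine this.congr (Filter.Eventually.of_forall fun ω => by ring)
  have hI1 : Integrable (fun ω => (2 * c) * (∑ j, a j * ε ω j)) μ :=
    (integrable_finset_sum _ fun j _ => hintL j).const_mul _
  have hI2 : Integrable (fun ω => ∑ j, ∑ k, a j * ε ω j * (a k * ε ω k)) μ :=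
    integrable_finset_sum _ fun j _ => integrable_finset_sum _ fun k _ => hintLL j k
  refine (((integrable_const (c ^ 2)).add hI1).add hI2).congr
    (Filter.Eventually.of_forall fun ω => ?_)
  show c ^ 2 + (2 * c) * (∑ j, a j * ε ω j) + ∑ j, ∑ k, a j * ε ω j * (a k * ε ω k) = _
  rw [← Finset.sum_mul_sum]
  ring

end Prob

lemma euclNorm_eq_sqrt {ι : Type*} [Fintype ι] (x : ι → ℝ) :
    euclNorm x = Real.sqrt (∑ i, x i ^ 2) := by
  rw [euclNorm, EuclideanSpace.norm_eq]
  congr 1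
  refine Finset.sum_congr rfl fun i _ => ?_
  rw [Real.norm_eq_abs, sq_abs]
  rfl

lemma euclNorm_nonneg {ι : Type*} [Fintype ι] (x : ι → ℝ) : 0 ≤ euclNorm x :=
  norm_nonneg _

lemma euclNorm_sq {ι : Type*} [Fintype ι] (x : ι → ℝ) :
    euclNorm x ^ 2 = ∑ i, x i ^ 2 := by
  rw [euclNorm_eq_sqrt, Real.sq_sqrt (Finset.sum_nonneg fun i _ => sq_nonneg _)]

lemma euclNorm_smul {ι : Type*} [Fintype ι] (c : ℝ) (x : ι → ℝ) :
    euclNorm (c • x) = |c| * euclNorm x := by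
  rw [euclNorm, euclNorm, _root_.map_smul, norm_smul, Real.norm_eq_abs]

lemma euclNorm_neg {ι : Type*} [Fintype ι] (x : ι → ℝ) : euclNorm (-x) = euclNorm x := by
  rw [euclNorm, euclNorm, _root_.map_neg, norm_neg]

lemma euclNorm_sum_elim {m n : ℕ} (θ : Fin m → ℝ) :
    euclNorm (Sum.elim θ (0 : Fin n → ℝ)) = euclNorm θ := by
  rw [euclNorm_eq_sqrt, euclNorm_eq_sqrt, Fintype.sum_sum_type]
  simp


section MatrixLemmas

variable {M N : ℕ}

lemma pbdw_split (A : Matrix (Fin M) (Fin M) ℝ) (K : Matrix (Fin M) (Fin N) ℝ) (ξ : ℝ) :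
    pbdwMat A K ξ = pbdwMat A K 0 + (ξ * (M : ℝ)) • iTilde M N := by
  ext i j
  cases i <;> cases j <;>
    simp [pbdwMat, iTilde, Matrix.fromBlocks, Matrix.add_apply, Matrix.smul_apply,
      Matrix.one_apply, mul_ite]

lemma iTilde_mulVec (u : Fin M ⊕ Fin N → ℝ) :
    (iTilde M N).mulVec u = Sum.elim (fun i => u (Sum.inl i)) 0 := by
  funext k
  cases k with
  | inl i =>
    simp [iTilde, Matrix.mulVec, dotProduct, Fintype.sum_sum_type, Matrix.fromBlocks,
      Matrix.one_apply, ite_mul]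
  | inr i =>
    simp [iTilde, Matrix.mulVec, dotProduct, Fintype.sum_sum_type, Matrix.fromBlocks]

lemma mulVec_sum_elim_left (P : Matrix (Fin M ⊕ Fin N) (Fin M ⊕ Fin N) ℝ)
    (e : Fin M → ℝ) (k : Fin M ⊕ Fin N) :
    P.mulVec (Sum.elim e 0) k = ∑ j, P k (Sum.inl j) * e j := by
  simp [Matrix.mulVec, dotProduct, Fintype.sum_sum_type]

lemma trace_formula (P : Matrix (Fin M ⊕ Fin N) (Fin M ⊕ Fin N) ℝ) :
    (P * iTilde M N * Pᵀ).trace = ∑ k, ∑ j : Fin M, P k (Sum.inl j) ^ 2 := by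
  rw [Matrix.trace]
  refine Finset.sum_congr rfl fun k _ => ?_
  rw [Matrix.diag_apply, Matrix.mul_apply]
  rw [Fintype.sum_sum_type]
  have h1 : ∀ j : Fin M, (P * iTilde M N) k (Sum.inl j) = P k (Sum.inl j) := by
    intro j
    rw [Matrix.mul_apply, Fintype.sum_sum_type]
    simp [iTilde, Matrix.fromBlocks, Matrix.one_apply, mul_ite]
  have h2 : ∀ j : Fin N, (P * iTilde M N) k (Sum.inr j) = 0 := by
    intro j
    rw [Matrix.mul_apply, Fintype.sum_sum_type]
    simp [iTilde, Matrix.fromBlocks]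
  simp only [h1, h2, Matrix.transpose_apply, zero_mul, Finset.sum_const_zero, add_zero]
  refine Finset.sum_congr rfl fun j _ => ?_
  ring

end MatrixLemmas

/-- **PBDW a priori mean-squared error estimate for imperfect measurements
(second estimate of Theorem 2, matrix form).**
The components of the noise `ε` are independent and each distributed as a Gaussian
`N(0, σ²)`.  With `u^opt_{ξ=0} = P(0)⁻¹ (y, 0)` (first block `θ^opt`),
`u*_ξ(ε) = P(ξ)⁻¹ (y+ε, 0)`, and any `s > 0` with `s‖x‖₂ ≤ ‖P(ξ)x‖₂` for all `x`
(in particular `s = s_min(P(ξ))`), one has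
`𝔼[‖u*_ξ(ε) − u^opt_{ξ=0}‖₂²] ≤ (ξM‖θ^opt‖₂/s)² + σ²·Tr(P(ξ)⁻¹ Ĩ P(ξ)⁻ᵀ)`. -/
theorem pbdw_mse_estimate_imperfect
    {M N : ℕ} (hM : 0 < M) (hN : 0 < N)
    (A : Matrix (Fin M) (Fin M) ℝ) (hA : A.IsSymm)
    (K : Matrix (Fin M) (Fin N) ℝ)
    (ξ : ℝ) (hξ : 0 ≤ ξ)
    (hPξ : IsUnit (pbdwMat A K ξ)) (hP0 : IsUnit (pbdwMat A K 0))
    {Ω : Type*} [MeasurableSpace Ω] (μ : Measure Ω) [IsProbabilityMeasure μ]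
    (ε : Ω → Fin M → ℝ) (σ : NNReal)
    (hmeas : ∀ i, Measurable fun ω => ε ω i)
    (hindep : iIndepFun (fun i ω => ε ω i) μ)
    (hgauss : ∀ i, Measure.map (fun ω => ε ω i) μ = gaussianReal 0 (σ ^ 2))
    (y : Fin M → ℝ)
    (s : ℝ) (hs : 0 < s)
    (hsmin : ∀ x : Fin M ⊕ Fin N → ℝ,
      s * euclNorm x ≤ euclNorm ((pbdwMat A K ξ).mulVec x)) :
    ∫ ω, (euclNorm ((pbdwMat A K ξ)⁻¹.mulVec (Sum.elim (y + ε ω) 0)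
            - (pbdwMat A K 0)⁻¹.mulVec (Sum.elim y 0))) ^ 2 ∂μ
      ≤ (ξ * (M : ℝ) *
            euclNorm (fun i : Fin M =>
              (pbdwMat A K 0)⁻¹.mulVec (Sum.elim y 0) (Sum.inl i)) / s) ^ 2
        + (σ : ℝ) ^ 2 * ((pbdwMat A K ξ)⁻¹ * iTilde M N * ((pbdwMat A K ξ)⁻¹)ᵀ).trace := by
  classical
  set b : Fin M ⊕ Fin N → ℝ := Sum.elim y 0 with hb
  set P : Matrix (Fin M ⊕ Fin N) (Fin M ⊕ Fin N) ℝ := pbdwMat A K ξ with hP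
  set P0 : Matrix (Fin M ⊕ Fin N) (Fin M ⊕ Fin N) ℝ := pbdwMat A K 0 with hP0def
  set u0 : Fin M ⊕ Fin N → ℝ := P0⁻¹.mulVec b with hu0
  set θ : Fin M → ℝ := fun i => u0 (Sum.inl i) with hθ
  set d : Fin M ⊕ Fin N → ℝ := P⁻¹.mulVec b - u0 with hd
  have hdetP : IsUnit P.det := (Matrix.isUnit_iff_isUnit_det _).1 hPξ
  have hdetP0 : IsUnit P0.det := (Matrix.isUnit_iff_isUnit_det _).1 hP0
  have hPu0 : P0.mulVec u0 = b := by
    rw [hu0, Matrix.mulVec_mulVec, Matrix.mul_nonsing_inv _ hdetP0, Matrix.one_mulVec]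
  have hPd : P.mulVec d = -((ξ * (M : ℝ)) • Sum.elim θ 0) := by
    have h1 : P.mulVec (P⁻¹.mulVec b) = b := by
      rw [Matrix.mulVec_mulVec, Matrix.mul_nonsing_inv _ hdetP, Matrix.one_mulVec]
    have h2 : P.mulVec u0 = b + (ξ * (M : ℝ)) • Sum.elim θ 0 := by
      rw [hP, pbdw_split A K ξ, Matrix.add_mulVec,
        show pbdwMat A K 0 = P0 from hP0def.symm, hPu0,
        Matrix.smul_mulVec, iTilde_mulVec]
    rw [hd, Matrix.mulVec_sub, h1, h2]
    abel
  have hξM : (0:ℝ) ≤ ξ * (M : ℝ) := by positivity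
  have hdbound : euclNorm d ≤ ξ * (M : ℝ) * euclNorm θ / s := by
    have h1 := hsmin d
    rw [hPd, euclNorm_neg, euclNorm_smul, euclNorm_sum_elim,
      abs_of_nonneg hξM] at h1
    rw [le_div_iff₀ hs]
    nlinarith [h1]
  have hdsq : euclNorm d ^ 2 ≤ (ξ * (M : ℝ) * euclNorm θ / s) ^ 2 :=
    pow_le_pow_left₀ (euclNorm_nonneg d) hdbound 2
  have hpoint : ∀ ω, P⁻¹.mulVec (Sum.elim (y + ε ω) 0) - u0
      = fun k => d k + ∑ j, P⁻¹ k (Sum.inl j) * ε ω j := by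
    intro ω
    funext k
    have hsplit : (Sum.elim (y + ε ω) (0 : Fin N → ℝ)) = b + Sum.elim (ε ω) 0 := by
      funext l; cases l <;> simp [hb]
    rw [hsplit, Matrix.mulVec_add]
    simp only [Pi.sub_apply, Pi.add_apply, hd]
    rw [mulVec_sum_elim_left P⁻¹ (ε ω) k]
    ring
  have hinteg : ∀ ω, (euclNorm (P⁻¹.mulVec (Sum.elim (y + ε ω) 0) - u0)) ^ 2
      = ∑ k, (d k + ∑ j, P⁻¹ k (Sum.inl j) * ε ω j) ^ 2 := by
    intro ω; rw [hpoint ω, euclNorm_sq]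
  have hmain : ∫ ω, (euclNorm (P⁻¹.mulVec (Sum.elim (y + ε ω) 0) - u0)) ^ 2 ∂μ
      = euclNorm d ^ 2 + (σ : ℝ) ^ 2 * (P⁻¹ * iTilde M N * (P⁻¹)ᵀ).trace := by
    simp_rw [hinteg]
    rw [integral_finset_sum _ fun k _ =>
      key_integrable μ ε σ hmeas hindep hgauss (d k) (fun j => P⁻¹ k (Sum.inl j))]
    have hterm : ∀ k, ∫ ω, (d k + ∑ j, P⁻¹ k (Sum.inl j) * ε ω j) ^ 2 ∂μ
        = d k ^ 2 + (σ : ℝ) ^ 2 * ∑ j, P⁻¹ k (Sum.inl j) ^ 2 :=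
      fun k => key_expectation μ ε σ hmeas hindep hgauss (d k) _
    simp_rw [hterm]
    rw [Finset.sum_add_distrib, ← Finset.mul_sum, ← euclNorm_sq, trace_formula]
  rw [hmain]
  exact add_le_add_left hdsq _
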